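/- The geometric distribution p(n) = N^n/(N+1)^{n+1} maximizes Shannon entropy among all probability distributions q on ℕ with mean Σ_n n·q(n) ≤ N; hence H(q) ≤ g(N) for all such q. -/

import Mathlib

/-- g(N) = (N+1)log₂(N+1) − N log₂ N. -/
noncomputable def gEntropy (N : ℝ) : ℝ :=
  (N + 1) * Real.logb 2 (N + 1) - N * Real.logb 2 N

/-- Maximum-entropy property of the geometric distribution: any probability
distribution q on ℕ with mean at most N has Shannon entropy at most
g(N) = (N+1)log₂(N+1) − N log₂ N, the entropy of the geometric (thermal)
distribution p(n) = Nⁿ/(N+1)^{n+1} with mean N. -/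
theorem thermal_maximizes_entropy (N : ℝ) (hN : 0 < N)
    (q : ℕ → ℝ) (hq0 : ∀ n, 0 ≤ q n)
    (hqsum : Summable q) (hq1 : (∑' n : ℕ, q n) = 1)
    (hmean_sum : Summable (fun n : ℕ => (n : ℝ) * q n))
    (hmean : (∑' n : ℕ, (n : ℝ) * q n) ≤ N)
    (hent_sum : Summable (fun n : ℕ => q n * Real.logb 2 (q n))) :
    -(∑' n : ℕ, q n * Real.logb 2 (q n)) ≤ gEntropy N := by
  have hN1 : (0:ℝ) < N + 1 := by linarith
  have hlog2 : 0 < Real.log 2 := Real.log_pos (by norm_num)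
  set r : ℝ := N / (N + 1) with hr_def
  have hrpos : 0 < r := div_pos hN hN1
  have hr1 : r < 1 := by rw [div_lt_one hN1]; linarith
  set p : ℕ → ℝ := fun n => (1/(N+1)) * r ^ n with hp_def
  have hp_pos : ∀ n, 0 < p n := fun n => by
    have := pow_pos hrpos n
    positivity
  have hp_sum : Summable p := (summable_geometric_of_lt_one hrpos.le hr1).mul_left _
  have hp_tsum : (∑' n, p n) = 1 := by
    rw [hp_def, tsum_mul_left, tsum_geometric_of_lt_one hrpos.le hr1, hr_def]
    field_simp
    ring
  set L : ℕ → ℝ := fun n => (n:ℝ) * (Real.log N - Real.log (N+1)) - Real.log (N+1)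
    with hL_def
  have hlogp : ∀ n, Real.log (p n) = L n := by
    intro n
    rw [hp_def]
    simp only
    rw [Real.log_mul (by positivity) (by positivity), Real.log_pow, hr_def,
      Real.log_div hN.ne' hN1.ne', one_div, Real.log_inv, hL_def]
    push_cast; ring
  -- summability of q * log q
  have hqlog : Summable (fun n => q n * Real.log (q n)) := by
    have h := hent_sum.mul_right (Real.log 2)
    refine h.congr fun n => ?_
    rw [Real.logb]
    field_simp
  -- summability of q * L
  have hLrw : (fun n => q n * L n)
      = fun (n:ℕ) => (Real.log N - Real.log (N+1)) * ((n:ℝ) * q n)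
        - Real.log (N+1) * q n := by
    funext n; rw [hL_def]; ring
  have hqL : Summable (fun n => q n * L n) := by
    rw [hLrw]; exact (hmean_sum.mul_left _).sub (hqsum.mul_left _)
  -- pointwise Gibbs inequality
  have key : ∀ n, q n * L n + (q n - p n) ≤ q n * Real.log (q n) := by
    intro n
    rcases (hq0 n).eq_or_lt with h | h
    · rw [← h]; simp [(hp_pos n).le]
    · have h1 : Real.log (p n / q n) ≤ p n / q n - 1 :=
        Real.log_le_sub_one_of_pos (div_pos (hp_pos n) h)
      rw [Real.log_div (hp_pos n).ne' h.ne'] at h1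
      have h2 : q n * (p n / q n) = p n := by field_simp
      nlinarith [mul_le_mul_of_nonneg_left h1 h.le, hlogp n]
  -- sum inequality
  have hsum_le : (∑' n, (q n * L n + (q n - p n))) ≤ ∑' n, q n * Real.log (q n) :=
    Summable.tsum_le_tsum key (hqL.add (hqsum.sub hp_sum)) hqlog
  have hsplit : (∑' n, (q n * L n + (q n - p n))) = ∑' n, q n * L n := by
    rw [Summable.tsum_add hqL (hqsum.sub hp_sum), Summable.tsum_sub hqsum hp_sum, hq1, hp_tsum]
    ring
  set M : ℝ := ∑' (n:ℕ), (n:ℝ) * q n with hM_def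
  have hqLval : (∑' n, q n * L n)
      = (Real.log N - Real.log (N+1)) * M - Real.log (N+1) := by
    rw [hLrw, Summable.tsum_sub (hmean_sum.mul_left _) (hqsum.mul_left _),
      tsum_mul_left, tsum_mul_left, hq1, hM_def]
    ring
  have main : -(∑' n, q n * Real.log (q n))
      ≤ (N+1) * Real.log (N+1) - N * Real.log N := by
    have h1 : (Real.log N - Real.log (N+1)) * M - Real.log (N+1)
        ≤ ∑' n, q n * Real.log (q n) := by
      rw [← hqLval, ← hsplit]; exact hsum_le
    have hmono : Real.log N ≤ Real.log (N+1) :=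
      Real.log_le_log hN (by linarith)
    have h2 : (Real.log (N+1) - Real.log N) * M ≤ (Real.log (N+1) - Real.log N) * N :=
      mul_le_mul_of_nonneg_left hmean (by linarith)
    nlinarith
  -- convert to logb
  have hrwq : (∑' n, q n * Real.logb 2 (q n))
      = (∑' n, q n * Real.log (q n)) * (Real.log 2)⁻¹ := by
    rw [← tsum_mul_right]
    congr 1; funext n; rw [Real.logb]; ring
  rw [hrwq, gEntropy, Real.logb, Real.logb]
  rw [div_eq_mul_inv, div_eq_mul_inv]
  have := mul_le_mul_of_nonneg_right main (inv_nonneg.mpr hlog2.le)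
  nlinarith [this]
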